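/- (Lemma 3.4) Let β ∈ ℝ be such that every z ∈ S_β^opt all of whose blocks are extreme points of the corresponding Ω_i^+ belongs to S^opt. Let ẑ = (x̂_1,…,x̂_n) ∈ S_β^opt and suppose there is exactly one index i ∈ {1,…,n} such that x̂_i is not an extreme point of Ω_i^+ (so x̂_j is an extreme point of Ω_j^+ for every j ≠ i). Then ẑ ∈ S^opt. -/

import Mathlib

noncomputable section

/-- Dot product on `ℝ^m`. -/
def dotp {m : ℕ} (x y : Fin m → ℝ) : ℝ := ∑ k, x k * y k

/-- The ℓ₁ penalty term `p(z) = Σ_{i<j} ⟨x_i, x_j⟩`. -/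
def pen {n m : ℕ} (z : Fin n → Fin m → ℝ) : ℝ :=
  ∑ i : Fin n, ∑ j : Fin n, if i < j then dotp (z i) (z j) else 0

/-- `f` is multi-affine: affine in each block when the others are fixed. -/
def MultiAffine {n m : ℕ} (f : (Fin n → Fin m → ℝ) → ℝ) : Prop :=
  ∀ (i : Fin n) (z : Fin n → Fin m → ℝ) (x y : Fin m → ℝ) (t : ℝ),
    f (Function.update z i (t • x + (1 - t) • y)) =
      t * f (Function.update z i x) + (1 - t) * f (Function.update z i y)

/-- Membership in `Ω = Ω₁⁺ × ⋯ × Ωₙ⁺`. -/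
def InOmega {n m : ℕ} (Om : Fin n → Set (Fin m → ℝ)) (z : Fin n → Fin m → ℝ) : Prop :=
  ∀ i, z i ∈ Om i

/-- Feasibility for (P): `z ∈ Ω` and `⟨x_i, x_j⟩ = 0` for all `i ≠ j`. -/
def Feas {n m : ℕ} (Om : Fin n → Set (Fin m → ℝ)) (z : Fin n → Fin m → ℝ) : Prop :=
  InOmega Om z ∧ ∀ i j, i ≠ j → dotp (z i) (z j) = 0

/-- `S^opt`: global minimizers of `f` over the feasible region of (P). -/
def SOpt {n m : ℕ} (Om : Fin n → Set (Fin m → ℝ)) (f : (Fin n → Fin m → ℝ) → ℝ) :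
    Set (Fin n → Fin m → ℝ) :=
  {z | Feas Om z ∧ ∀ w, Feas Om w → f z ≤ f w}

/-- `S_β^opt`: global minimizers of `f_β = f + β p` over `Ω`. -/
def SBeta {n m : ℕ} (Om : Fin n → Set (Fin m → ℝ)) (f : (Fin n → Fin m → ℝ) → ℝ) (β : ℝ) :
    Set (Fin n → Fin m → ℝ) :=
  {z | InOmega Om z ∧ ∀ w, InOmega Om w → f z + β * pen z ≤ f w + β * pen w}

lemma dotp_comm {m : ℕ} (x y : Fin m → ℝ) : dotp x y = dotp y x := by
  simp [dotp, mul_comm]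

lemma dotp_affine_left {m : ℕ} (x y w : Fin m → ℝ) (t : ℝ) :
    dotp (t • x + (1 - t) • y) w = t * dotp x w + (1 - t) * dotp y w := by
  simp only [dotp, Finset.mul_sum, ← Finset.sum_add_distrib]
  exact Finset.sum_congr rfl fun k _ => by
    simp only [Pi.add_apply, Pi.smul_apply, smul_eq_mul]; ring

lemma dotp_affine_right {m : ℕ} (w x y : Fin m → ℝ) (t : ℝ) :
    dotp w (t • x + (1 - t) • y) = t * dotp w x + (1 - t) * dotp w y := by
  rw [dotp_comm, dotp_affine_left, dotp_comm x, dotp_comm y]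

lemma dotp_sum_left {m : ℕ} (s : Finset (Fin m → ℝ)) (w : (Fin m → ℝ) → ℝ)
    (v : Fin m → ℝ) :
    dotp (∑ e ∈ s, w e • e) v = ∑ e ∈ s, w e * dotp e v := by
  simp only [dotp, Finset.sum_apply, Pi.smul_apply, smul_eq_mul, Finset.sum_mul]
  rw [Finset.sum_comm]
  exact Finset.sum_congr rfl fun e _ => by rw [Finset.mul_sum]; exact Finset.sum_congr rfl fun k _ => by ring

lemma pen_update_affine {n m : ℕ} (z : Fin n → Fin m → ℝ) (i : Fin n)
    (x y : Fin m → ℝ) (t : ℝ) :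
    pen (Function.update z i (t • x + (1 - t) • y)) =
      t * pen (Function.update z i x) + (1 - t) * pen (Function.update z i y) := by
  unfold pen
  rw [Finset.mul_sum, Finset.mul_sum, ← Finset.sum_add_distrib]
  refine Finset.sum_congr rfl fun a _ => ?_
  rw [Finset.mul_sum, Finset.mul_sum, ← Finset.sum_add_distrib]
  refine Finset.sum_congr rfl fun b _ => ?_
  by_cases hab : a < b
  · simp only [if_pos hab]
    rcases eq_or_ne a i with rfl | ha
    · have hb : b ≠ a := (ne_of_gt hab)
      rw [Function.update_self, Function.update_self, Function.update_self,
        Function.update_of_ne hb, Function.update_of_ne hb, Function.update_of_ne hb,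
        dotp_affine_left]
    · rw [Function.update_of_ne ha, Function.update_of_ne ha, Function.update_of_ne ha]
      rcases eq_or_ne b i with rfl | hb
      · rw [Function.update_self, Function.update_self, Function.update_self,
          dotp_affine_right]
      · rw [Function.update_of_ne hb, Function.update_of_ne hb, Function.update_of_ne hb]
        ring
  · simp only [if_neg hab]; ring

lemma comb_aux {m : ℕ} (φ : (Fin m → ℝ) → ℝ)
    (hφ : ∀ x y t, φ (t • x + (1 - t) • y) = t * φ x + (1 - t) * φ y)
    (s : Finset (Fin m → ℝ)) :
    ∀ w : (Fin m → ℝ) → ℝ, (∀ e ∈ s, 0 ≤ w e) → ∑ e ∈ s, w e = 1 →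
      φ (∑ e ∈ s, w e • e) = ∑ e ∈ s, w e * φ e := by
  classical
  induction s using Finset.induction_on with
  | empty => intro w _ h1; simp at h1
  | @insert a s ha ih =>
    intro w hw0 hw1
    rw [Finset.sum_insert ha] at hw1 ⊢
    rw [Finset.sum_insert ha]
    have hrest : ∑ e ∈ s, w e = 1 - w a := by linarith
    by_cases ht : w a = 1
    · have h0 : ∑ e ∈ s, w e = 0 := by rw [hrest, ht]; ring
      have hz : ∀ e ∈ s, w e = 0 :=
        (Finset.sum_eq_zero_iff_of_nonneg
          (fun e he => hw0 e (Finset.mem_insert_of_mem he))).1 h0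
      have h1 : ∑ e ∈ s, w e • e = 0 :=
        Finset.sum_eq_zero fun e he => by rw [hz e he, zero_smul]
      have h2 : ∑ e ∈ s, w e * φ e = 0 :=
        Finset.sum_eq_zero fun e he => by rw [hz e he, zero_mul]
      rw [h1, h2, ht, add_zero, add_zero, one_smul, one_mul]
    · have hnn : 0 ≤ ∑ e ∈ s, w e :=
        Finset.sum_nonneg fun e he => hw0 e (Finset.mem_insert_of_mem he)
      have ht1 : w a < 1 := lt_of_le_of_ne (by linarith) ht
      have hpos : 0 < 1 - w a := by linarith
      set w' := fun e => w e / (1 - w a) with hw'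
      have hw'0 : ∀ e ∈ s, 0 ≤ w' e := fun e he =>
        div_nonneg (hw0 e (Finset.mem_insert_of_mem he)) hpos.le
      have hw'1 : ∑ e ∈ s, w' e = 1 := by
        rw [hw', ← Finset.sum_div, hrest, div_self hpos.ne']
      have hy : ∑ e ∈ s, w e • e = (1 - w a) • ∑ e ∈ s, w' e • e := by
        rw [Finset.smul_sum]
        refine Finset.sum_congr rfl fun e he => ?_
        rw [smul_smul]
        congr 1
        simp only [hw']
        field_simp [hpos.ne']
      rw [hy, hφ a _ (w a), ih w' hw'0 hw'1, Finset.mul_sum]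
      congr 1
      refine Finset.sum_congr rfl fun e he => ?_
      rw [hw']
      field_simp

lemma pen_eq_zero {n m : ℕ} (z : Fin n → Fin m → ℝ)
    (h : ∀ j k, j ≠ k → dotp (z j) (z k) = 0) : pen z = 0 :=
  Finset.sum_eq_zero fun a _ => Finset.sum_eq_zero fun b _ => by
    by_cases hab : a < b
    · rw [if_pos hab, h a b (ne_of_lt hab)]
    · rw [if_neg hab]

/-- **Lemma 3.4.** Suppose every extreme-point optimal solution of (P_β) is optimal
for (P). If `ẑ ∈ S_β^opt` has exactly one block that is not an extreme point of the
corresponding `Ω_i⁺`, then `ẑ ∈ S^opt`. -/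
theorem one_nonextreme_block_optimal (n m : ℕ) (hn : 2 ≤ n) (hm : 1 ≤ m)
    (Om : Fin n → Set (Fin m → ℝ))
    (hne : ∀ i, (Om i).Nonempty) (hcpt : ∀ i, IsCompact (Om i))
    (hcvx : ∀ i, Convex ℝ (Om i))
    (hnonneg : ∀ i, ∀ x ∈ Om i, ∀ k, 0 ≤ x k)
    (hfin : ∀ i, (Set.extremePoints ℝ (Om i)).Finite)
    (f : (Fin n → Fin m → ℝ) → ℝ) (hf : MultiAffine f) (hfc : Continuous f)
    (hFne : ∃ z, Feas Om z)
    (β : ℝ)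
    (hext : ∀ z ∈ SBeta Om f β, (∀ i, z i ∈ Set.extremePoints ℝ (Om i)) → z ∈ SOpt Om f)
    (zhat : Fin n → Fin m → ℝ) (hzhat : zhat ∈ SBeta Om f β)
    (i : Fin n) (hi : zhat i ∉ Set.extremePoints ℝ (Om i))
    (hothers : ∀ j, j ≠ i → zhat j ∈ Set.extremePoints ℝ (Om j)) :
    zhat ∈ SOpt Om f := by
  classical
  obtain ⟨hΩ, hmin⟩ := hzhat
  set E := Set.extremePoints ℝ (Om i) with hEdef
  have hOmi : Om i = convexHull ℝ E := by
    have h1 := closure_convexHull_extremePoints (hcpt i) (hcvx i)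
    rw [((hfin i).isCompact_convexHull ℝ).isClosed.closure_eq] at h1
    exact h1.symm
  have hx : zhat i ∈ convexHull ℝ E := hOmi ▸ hΩ i
  rw [(hfin i).convexHull_eq] at hx
  obtain ⟨w, hw0, hw1, hwc⟩ := hx
  set S := (hfin i).toFinset with hSdef
  have hrep : ∑ e ∈ S, w e • e = zhat i := by
    rw [← Finset.centerMass_eq_of_sum_1 _ _ hw1] at *
    exact hwc
  set φ : (Fin m → ℝ) → ℝ :=
    fun x => f (Function.update zhat i x) + β * pen (Function.update zhat i x) with hφdef
  have hφ : ∀ x y t, φ (t • x + (1 - t) • y) = t * φ x + (1 - t) * φ y := by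
    intro x y t
    simp only [hφdef]
    rw [hf i zhat x y t, pen_update_affine]
    ring
  have hupd : Function.update zhat i (zhat i) = zhat := Function.update_eq_self i zhat
  have hφz : φ (zhat i) = f zhat + β * pen zhat := by
    simp only [hφdef, hupd]
  have hmemE : E ⊆ Om i := extremePoints_subset
  have hOme : ∀ e ∈ E, InOmega Om (Function.update zhat i e) := by
    intro e he j
    rcases eq_or_ne j i with rfl | hj
    · simpa using hmemE he
    · simpa [Function.update_of_ne hj] using hΩ j
  have hminφ : ∀ e ∈ E, φ (zhat i) ≤ φ e := by
    intro e he
    have h := hmin _ (hOme e he)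
    rw [hφz]
    exact h
  have hmemS : ∀ e ∈ S, e ∈ E := fun e he => (hfin i).mem_toFinset.1 he
  have hcomb : φ (zhat i) = ∑ e ∈ S, w e * φ e := by
    rw [← hrep]
    exact comb_aux φ hφ S w (fun e he => hw0 e (hmemS e he)) hw1
  have hkey : ∀ e ∈ S, w e ≠ 0 → φ e = φ (zhat i) := by
    have hzero : ∑ e ∈ S, w e * (φ e - φ (zhat i)) = 0 := by
      have h2 : ∑ e ∈ S, w e * (φ e - φ (zhat i)) =
          (∑ e ∈ S, w e * φ e) - (∑ e ∈ S, w e) * φ (zhat i) := by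
        rw [Finset.sum_mul, ← Finset.sum_sub_distrib]
        exact Finset.sum_congr rfl fun e _ => by ring
      rw [h2, hw1, ← hcomb]; ring
    intro e heS hwne
    have hterm := (Finset.sum_eq_zero_iff_of_nonneg
      (fun e heS => mul_nonneg (hw0 e (hmemS e heS))
        (sub_nonneg.2 (hminφ e (hmemS e heS))))).1 hzero e heS
    rcases mul_eq_zero.1 hterm with h | h
    · exact absurd h hwne
    · linarith [sub_eq_zero.1 h]
  have hSopt : ∀ e ∈ S, w e ≠ 0 → Function.update zhat i e ∈ SOpt Om f := by
    intro e heS hwne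
    have heE : e ∈ E := hmemS e heS
    have hSb : Function.update zhat i e ∈ SBeta Om f β := by
      refine ⟨hOme e heE, fun v hv => ?_⟩
      have h1 : f (Function.update zhat i e) + β * pen (Function.update zhat i e)
          = φ (zhat i) := hkey e heS hwne
      rw [h1, hφz]
      exact hmin v hv
    refine hext _ hSb ?_
    intro j
    rcases eq_or_ne j i with rfl | hj
    · simpa using heE
    · simpa [Function.update_of_ne hj] using hothers j hj
  obtain ⟨e0, he0S, he0w⟩ : ∃ e ∈ S, w e ≠ 0 :=
    Finset.exists_ne_zero_of_sum_ne_zero (by rw [hw1]; norm_num)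
  obtain ⟨⟨hO0, horth0⟩, hopt0⟩ := hSopt e0 he0S he0w
  have hij : ∀ j, j ≠ i → dotp (zhat i) (zhat j) = 0 := by
    intro j hj
    rw [← hrep, dotp_sum_left]
    refine Finset.sum_eq_zero fun e heS => ?_
    by_cases hwe : w e = 0
    · rw [hwe, zero_mul]
    · obtain ⟨⟨_, horth⟩, _⟩ := hSopt e heS hwe
      have h := horth i j (Ne.symm hj)
      rw [Function.update_self, Function.update_of_ne hj] at h
      rw [h, mul_zero]
  have horthhat : ∀ j k, j ≠ k → dotp (zhat j) (zhat k) = 0 := by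
    intro j k hjk
    rcases eq_or_ne j i with rfl | hji
    · exact hij k (Ne.symm hjk)
    · rcases eq_or_ne k i with rfl | hki
      · rw [dotp_comm]; exact hij j hji
      · have h := horth0 j k hjk
        rw [Function.update_of_ne hji, Function.update_of_ne hki] at h
        exact h
  have hFeas : Feas Om zhat := ⟨hΩ, horthhat⟩
  have hpen : pen zhat = 0 := pen_eq_zero zhat horthhat
  have hpen0 : pen (Function.update zhat i e0) = 0 := pen_eq_zero _ horth0
  refine ⟨hFeas, fun v hv => ?_⟩
  have h1 : f zhat = φ (zhat i) := by rw [hφz, hpen]; ring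
  have h2 : φ (zhat i) = f (Function.update zhat i e0) := by
    rw [← hkey e0 he0S he0w]
    show f (Function.update zhat i e0) + β * pen (Function.update zhat i e0) = _
    rw [hpen0]; ring
  rw [h1, h2]
  exact hopt0 v hv
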